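/- For every ε > 0 and N ≥ 2, Vol(V_N) ≥ ε · Vol(V_{N−1}), where V_N = {(x₁,…,x_N) ∈ ℝᴺ : |x_i| ≤ ε for all i and |x₁ + ⋯ + x_k| ≤ ε for all 1 ≤ k ≤ N} and V_{N−1} is the analogous set in ℝ^{N−1}. -/

import Mathlib

open MeasureTheory

/-- The solid `V_N ⊆ ℝᴺ` from the volume lemma. -/
def Vset (ε : ℝ) (N : ℕ) : Set (Fin N → ℝ) :=
  {x | (∀ i, |x i| ≤ ε) ∧ ∀ k : Fin N, |∑ i ∈ Finset.univ.filter (· ≤ k), x i| ≤ ε}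

lemma measurableSet_Vset (ε : ℝ) (N : ℕ) : MeasurableSet (Vset ε N) := by
  have h : Vset ε N = (⋂ i, {x : Fin N → ℝ | |x i| ≤ ε}) ∩
      ⋂ k : Fin N, {x | |∑ i ∈ Finset.univ.filter (· ≤ k), x i| ≤ ε} := by
    ext x; simp [Vset, Set.mem_iInter]
  rw [h]
  refine MeasurableSet.inter (MeasurableSet.iInter fun i => ?_)
    (MeasurableSet.iInter fun k => ?_)
  · exact measurableSet_le (measurable_pi_apply i).abs measurable_const
  · exact measurableSet_le
      ((Finset.measurable_sum _ fun i _ => measurable_pi_apply i).abs) measurable_const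

lemma abs_sum_Vset {ε : ℝ} {m : ℕ} {y : Fin (m + 1) → ℝ} (hy : y ∈ Vset ε (m + 1)) :
    |∑ i, y i| ≤ ε := by
  have h := hy.2 (Fin.last m)
  rwa [Finset.filter_true_of_mem (fun i _ => Fin.le_last i)] at h

lemma filter_le_castSucc {m : ℕ} (k' : Fin (m + 1)) :
    Finset.univ.filter (· ≤ Fin.castSucc k') =
      (Finset.univ.filter (· ≤ k')).map Fin.castSuccEmb := by
  ext i
  simp only [Finset.mem_filter, Finset.mem_map, Finset.mem_univ, true_and,
    Fin.castSuccEmb, Function.Embedding.coeFn_mk]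
  constructor
  · intro hi
    have hne : i ≠ Fin.last (m + 1) :=
      Fin.ne_last_of_lt (lt_of_le_of_lt hi (Fin.castSucc_lt_last k'))
    refine ⟨i.castPred hne, ?_, Fin.castSucc_castPred i hne⟩
    rw [← Fin.castSucc_le_castSucc_iff, Fin.castSucc_castPred]
    exact hi
  · rintro ⟨j, hj, rfl⟩
    exact Fin.castSucc_le_castSucc_iff.mpr hj

lemma snoc_mem_Vset {ε : ℝ} {m : ℕ} {y : Fin (m + 1) → ℝ} (hy : y ∈ Vset ε (m + 1))
    {t : ℝ} (ht : t ∈ Set.Icc (-ε - min (∑ i, y i) 0) (ε - max (∑ i, y i) 0)) :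
    Fin.snoc y t ∈ Vset ε (m + 2) := by
  obtain ⟨hy1, hy2⟩ := hy
  have hmin : min (∑ i, y i) 0 ≤ 0 := min_le_right _ _
  have hmax : (0:ℝ) ≤ max (∑ i, y i) 0 := le_max_right _ _
  have ht1 : -ε ≤ t := le_trans (by linarith [ht.1]) le_rfl
  have ht2 : t ≤ ε := by linarith [ht.2]
  constructor
  · intro i
    refine Fin.lastCases ?_ (fun j => ?_) i
    · rw [Fin.snoc_last]; exact abs_le.mpr ⟨ht1, ht2⟩
    · rw [Fin.snoc_castSucc]; exact hy1 j
  · intro k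
    refine Fin.lastCases ?_ (fun k' => ?_) k
    · rw [Finset.filter_true_of_mem (fun i _ => Fin.le_last i), Fin.sum_univ_castSucc]
      simp only [Fin.snoc_castSucc, Fin.snoc_last]
      have h1 : ∑ i, y i ≤ max (∑ i, y i) 0 := le_max_left _ _
      have h2 : min (∑ i, y i) 0 ≤ ∑ i, y i := min_le_left _ _
      exact abs_le.mpr ⟨by linarith [ht.1], by linarith [ht.2]⟩
    · rw [filter_le_castSucc, Finset.sum_map]
      simp only [Fin.coe_castSuccEmb, Fin.snoc_castSucc]
      exact hy2 k'

theorem volume_VN_recursion (ε : ℝ) (hε : 0 < ε) (N : ℕ) (hN : 2 ≤ N) :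
    ENNReal.ofReal ε * volume (Vset ε (N - 1)) ≤ volume (Vset ε N) := by
  obtain ⟨m, rfl⟩ : ∃ m, N = m + 2 := ⟨N - 2, by omega⟩
  show ENNReal.ofReal ε * volume (Vset ε (m + 1)) ≤ volume (Vset ε (m + 2))
  set e := MeasurableEquiv.piFinSuccAbove (fun _ : Fin (m + 2) => ℝ) (Fin.last (m + 1))
    with he
  have hp : MeasurePreserving e volume volume :=
    volume_preserving_piFinSuccAbove (fun _ : Fin (m + 2) => ℝ) (Fin.last (m + 1))
  set T : Set (ℝ × (Fin (m + 1) → ℝ)) :=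
    {p | p.2 ∈ Vset ε (m + 1) ∧
      p.1 ∈ Set.Icc (-ε - min (∑ i, p.2 i) 0) (ε - max (∑ i, p.2 i) 0)} with hTdef
  have hS : Measurable (fun y : Fin (m + 1) → ℝ => ∑ i, y i) :=
    Finset.measurable_sum _ fun i _ => measurable_pi_apply i
  have hT : MeasurableSet T := by
    refine MeasurableSet.inter (measurable_snd (measurableSet_Vset ε (m + 1))) ?_
    have h1 : Measurable fun p : ℝ × (Fin (m + 1) → ℝ) => -ε - min (∑ i, p.2 i) 0 :=
      ((hS.comp measurable_snd).min measurable_const).const_sub _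
    have h2 : Measurable fun p : ℝ × (Fin (m + 1) → ℝ) => ε - max (∑ i, p.2 i) 0 :=
      ((hS.comp measurable_snd).max measurable_const).const_sub _
    exact (measurableSet_le h1 measurable_fst).inter (measurableSet_le measurable_fst h2)
  have hsub : ⇑e ⁻¹' T ⊆ Vset ε (m + 2) := by
    intro x hx
    have hxe : e x = (x (Fin.last (m + 1)), Fin.init x) := by
      rw [he, MeasurableEquiv.piFinSuccAbove_apply]
      simp [Fin.removeNth_last]
    rw [Set.mem_preimage, hxe] at hx
    have := snoc_mem_Vset hx.1 hx.2
    rwa [Fin.snoc_init_self] at this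
  calc ENNReal.ofReal ε * volume (Vset ε (m + 1))
      = ∫⁻ y, Set.indicator (Vset ε (m + 1)) (fun _ => ENNReal.ofReal ε) y := by
        rw [lintegral_indicator (measurableSet_Vset _ _), setLIntegral_const, mul_comm]
    _ ≤ ∫⁻ y, volume ((fun t => (t, y)) ⁻¹' T) := by
        refine lintegral_mono fun y => ?_
        by_cases hy : y ∈ Vset ε (m + 1)
        · rw [Set.indicator_of_mem hy]
          have hpre : (fun t => (t, y)) ⁻¹' T =
              Set.Icc (-ε - min (∑ i, y i) 0) (ε - max (∑ i, y i) 0) := by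
            ext t; simp [hTdef, hy]
          rw [hpre, Real.volume_Icc]
          apply ENNReal.ofReal_le_ofReal
          have habs := abs_sum_Vset hy
          rcases le_total 0 (∑ i, y i) with h | h
          · rw [max_eq_left h, min_eq_right h]
            have : ∑ i, y i ≤ ε := le_of_abs_le habs
            linarith
          · rw [max_eq_right h, min_eq_left h]
            have : -ε ≤ ∑ i, y i := neg_le_of_abs_le habs
            linarith
        · rw [Set.indicator_of_notMem hy]
          exact zero_le
    _ = (volume.prod volume) T := (Measure.prod_apply_symm hT).symm
    _ = volume (⇑e ⁻¹' T) := by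
        rw [hp.measure_preimage hT.nullMeasurableSet, ← Measure.volume_eq_prod]
    _ ≤ volume (Vset ε (m + 2)) := measure_mono hsub
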